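/- In any nondegenerate triangle with circumcenter O, circumradius R and exradius rₐ opposite to A, the adjoint Nagel point Nₐ satisfies ONₐ² = R² + 4Rrₐ + 4rₐ² = (R + 2rₐ)². -/

import Mathlib

lemma dist_sq_coord2 (x y : EuclideanSpace ℝ (Fin 2)) :
    dist x y ^ 2 = (x 0 - y 0)^2 + (x 1 - y 1)^2 := by
  rw [EuclideanSpace.dist_eq, Real.sq_sqrt (by positivity)]
  simp [Fin.sum_univ_two, Real.dist_eq, sq_abs]

lemma strict3 (X Y Z : EuclideanSpace ℝ (Fin 2)) (h : ¬ Collinear ℝ ({X, Y, Z} : Set _)) :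
    dist X Z < dist X Y + dist Y Z := by
  rcases lt_or_eq_of_le (dist_triangle X Y Z) with h' | h'
  · exact h'
  · exact absurd (dist_add_dist_eq_iff.mp h'.symm).collinear h

lemma gram2 (u0 u1 v0 v1 w0 w1 a2 b2 c2 R2 : ℝ)
    (hc2 : u0^2+u1^2 = c2) (hb2 : v0^2+v1^2 = b2) (ha2 : (u0-v0)^2+(u1-v1)^2 = a2)
    (hw : w0^2+w1^2 = R2) (hwB : (w0+u0)^2+(w1+u1)^2 = R2) (hwC : (w0+v0)^2+(w1+v1)^2 = R2) :
    R2*(4*b2*c2-(b2+c2-a2)^2) = a2*b2*c2 := by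
  have hm : u0*v0+u1*v1 = (b2+c2-a2)/2 := by linear_combination (hb2+hc2-ha2)/2
  have hp : w0*u0+w1*u1 = -c2/2 := by linear_combination (hwB - hw - hc2)/2
  have hq : w0*v0+w1*v1 = -b2/2 := by linear_combination (hwC - hw - hb2)/2
  linear_combination
    (-4*(b2*R2 - (w0*v0+w1*v1)^2)) * hc2
    + (-4*((u0^2+u1^2)*R2 - (w0*u0+w1*u1)^2)) * hb2
    + (-4*((u0^2+u1^2)*(v0^2+v1^2) - (u0*v0+u1*v1)^2)) * hw
    + (-4*(2*(-b2/2)*(-c2/2) - ((b2+c2-a2)/2 + (u0*v0+u1*v1))*R2)) * hm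
    + (-4*(2*(u0*v0+u1*v1)*(-c2/2) - (-b2/2 + (w0*v0+w1*v1))*c2)) * hq
    + (-4*(2*(u0*v0+u1*v1)*(w0*v0+w1*v1) - (-c2/2 + (w0*u0+w1*u1))*b2)) * hp

/-- in any nondegenerate triangle with circumcenter `O`, circumradius `R` and
exradius `rₐ` opposite `A`, the adjoint Nagel point `Nₐ` satisfies
`ONₐ² = R² + 4Rrₐ + 4rₐ² = (R + 2rₐ)²`. -/
theorem stmt_14 (A B C O Na : EuclideanSpace ℝ (Fin 2)) (a b c s S R ra : ℝ)
    (hABC : AffineIndependent ℝ ![A, B, C])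
    (ha : a = dist B C) (hb : b = dist C A) (hc : c = dist A B)
    (hs : s = (a + b + c) / 2)
    (hS : S = Real.sqrt (s * (s - a) * (s - b) * (s - c)))
    (hra : ra = S / (s - a))
    (hOA : dist O A = R) (hOB : dist O B = R) (hOC : dist O C = R)
    (hNa : ∀ M : EuclideanSpace ℝ (Fin 2),
      (s + (c - s) + (b - s)) • (Na - M) =
        s • (A - M) + (c - s) • (B - M) + (b - s) • (C - M)) :
    dist O Na ^ 2 = R ^ 2 + 4 * R * ra + 4 * ra ^ 2 ∧ dist O Na ^ 2 = (R + 2 * ra) ^ 2 := by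
  -- nondegeneracy consequences
  have hncol : ¬ Collinear ℝ ({A, B, C} : Set _) :=
    affineIndependent_iff_not_collinear_set.mp hABC
  have t1 : dist B C < dist B A + dist A C := by
    refine strict3 _ _ _ fun h => hncol ?_
    rwa [show ({B,A,C}:Set _) = {A,B,C} by ext x; simp; tauto] at h
  have t2 : dist C A < dist C B + dist B A := by
    refine strict3 _ _ _ fun h => hncol ?_
    rwa [show ({C,B,A}:Set _) = {A,B,C} by ext x; simp; tauto] at h
  have t3 : dist A B < dist A C + dist C B := by
    refine strict3 _ _ _ fun h => hncol ?_
    rwa [show ({A,C,B}:Set _) = {A,B,C} by ext x; simp; tauto] at h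
  have hBC : B ≠ C := by
    intro h
    have := hABC.injective (show ![A,B,C] 1 = ![A,B,C] 2 by simpa using h)
    simp at this
  have apos : 0 < a := ha ▸ dist_pos.mpr hBC
  have hda : 0 < s - a := by
    rw [hs]; rw [ha, hb, hc]
    have : dist B A = dist A B := dist_comm _ _
    have h2 : dist A C = dist C A := dist_comm _ _
    nlinarith [t1]
  have hdb : 0 < s - b := by
    rw [hs, ha, hb, hc]
    have : dist C B = dist B C := dist_comm _ _
    have h2 : dist B A = dist A B := dist_comm _ _
    nlinarith [t2]
  have hdc : 0 < s - c := by
    rw [hs, ha, hb, hc]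
    have : dist A C = dist C A := dist_comm _ _
    have h2 : dist C B = dist B C := dist_comm _ _
    nlinarith [t3]
  have hspos : 0 < s := by rw [hs]; nlinarith [apos, dist_nonneg.trans_eq hb.symm, dist_nonneg.trans_eq hc.symm]
  have bpos : 0 < b := by nlinarith
  have cpos : 0 < c := by nlinarith
  have hRnn : 0 ≤ R := hOA ▸ dist_nonneg
  have hSnn : 0 ≤ S := hS ▸ Real.sqrt_nonneg _
  have hS2 : S^2 = s * (s-a) * (s-b) * (s-c) := by
    rw [hS]
    exact Real.sq_sqrt (by positivity)
  -- coordinate forms of the hypotheses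
  have hOA2 : (O 0 - A 0)^2 + (O 1 - A 1)^2 = R^2 := by
    rw [← hOA]; exact (dist_sq_coord2 O A).symm
  have hOB2 : (O 0 - B 0)^2 + (O 1 - B 1)^2 = R^2 := by
    rw [← hOB]; exact (dist_sq_coord2 O B).symm
  have hOC2 : (O 0 - C 0)^2 + (O 1 - C 1)^2 = R^2 := by
    rw [← hOC]; exact (dist_sq_coord2 O C).symm
  have ha2 : (B 0 - C 0)^2 + (B 1 - C 1)^2 = a^2 := by
    rw [ha]; exact (dist_sq_coord2 B C).symm
  have hb2 : (C 0 - A 0)^2 + (C 1 - A 1)^2 = b^2 := by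
    rw [hb]; exact (dist_sq_coord2 C A).symm
  have hc2 : (A 0 - B 0)^2 + (A 1 - B 1)^2 = c^2 := by
    rw [hc]; exact (dist_sq_coord2 A B).symm
  have hN0 : (s + (c - s) + (b - s)) * (Na 0 - O 0)
      = s * (A 0 - O 0) + (c - s) * (B 0 - O 0) + (b - s) * (C 0 - O 0) := by
    simpa using congrArg (fun v => v 0) (hNa O)
  have hN1 : (s + (c - s) + (b - s)) * (Na 1 - O 1)
      = s * (A 1 - O 1) + (c - s) * (B 1 - O 1) + (b - s) * (C 1 - O 1) := by
    simpa using congrArg (fun v => v 1) (hNa O)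
  -- main expansion
  have key1 : (s + (c - s) + (b - s))^2 * dist O Na ^ 2
      = R^2 * (s + (c - s) + (b - s))^2
        - s*(c-s)*c^2 - s*(b-s)*b^2 - (c-s)*(b-s)*a^2 := by
    rw [dist_sq_coord2]
    linear_combination
      ((s + (c - s) + (b - s)) * (Na 0 - O 0)
        + (s * (A 0 - O 0) + (c - s) * (B 0 - O 0) + (b - s) * (C 0 - O 0))) * hN0
      + ((s + (c - s) + (b - s)) * (Na 1 - O 1)
        + (s * (A 1 - O 1) + (c - s) * (B 1 - O 1) + (b - s) * (C 1 - O 1))) * hN1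
      + s*(s + (c - s) + (b - s)) * hOA2
      + (c-s)*(s + (c - s) + (b - s)) * hOB2
      + (b-s)*(s + (c - s) + (b - s)) * hOC2
      - s*(c-s) * hc2 - s*(b-s) * hb2 - (c-s)*(b-s) * ha2
  -- 16 R² S² = (abc)²
  have key2 : R^2*(4*b^2*c^2-(b^2+c^2-a^2)^2) = a^2*b^2*c^2 :=
    gram2 (B 0 - A 0) (B 1 - A 1) (C 0 - A 0) (C 1 - A 1) (A 0 - O 0) (A 1 - O 1)
      (a^2) (b^2) (c^2) (R^2)
      (by linear_combination hc2) (by linear_combination hb2) (by linear_combination ha2)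
      (by linear_combination hOA2) (by linear_combination hOB2) (by linear_combination hOC2)
  have hsq : (4*R*S)^2 = (a*b*c)^2 := by
    subst hs
    linear_combination 16*R^2*hS2 + key2
  have habc : 4*R*S = a*b*c := by
    have h0 : (4*R*S - a*b*c)*(4*R*S + a*b*c) = 0 := by linear_combination hsq
    have hpos' : 0 < 4*R*S + a*b*c := by positivity
    rcases mul_eq_zero.mp h0 with h | h
    · linarith
    · linarith
  have hd0 : s - a ≠ 0 := ne_of_gt hda
  have main : dist O Na ^ 2 = R ^ 2 + 4 * R * ra + 4 * ra ^ 2 := by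
    rw [hra]
    have expand : R^2 + 4*R*(S/(s-a)) + 4*(S/(s-a))^2
        = (R^2*(s-a)^2 + 4*R*S*(s-a) + 4*S^2) / (s-a)^2 := by
      field_simp
    rw [expand, eq_div_iff (by positivity)]
    subst hs
    linear_combination key1 + ((a-b-c)/2)*habc - 4*hS2
  exact ⟨main, main.trans (by ring)⟩
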